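/- If ∂[ω₁ : ⋯ : ω_p] = 0, then the one-forms ω₁, …, ω_p are linearly dependent over F; equivalently, ω₁ ∧ ω₂ ∧ ⋯ ∧ ω_p = 0. -/

import Mathlib

open ExteriorAlgebra

noncomputable def wedgeList (F : Type*) {W : Type*} [Field F] [AddCommGroup W] [Module F W]
    (l : List W) : ExteriorAlgebra F W := (l.map (ι F)).prod

noncomputable def wedge (F : Type*) {W : Type*} [Field F] [AddCommGroup W] [Module F W]
    {p : ℕ} (ω : Fin p → W) : ExteriorAlgebra F W := wedgeList F (List.ofFn ω)

noncomputable def der (F : Type*) {W : Type*} [Field F] [AddCommGroup W] [Module F W]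
    {p : ℕ} (ω : Fin p → W) : ExteriorAlgebra F W :=
  ∑ k : Fin p, (-1 : F) ^ (k : ℕ) • wedgeList F ((List.ofFn ω).eraseIdx k)

lemma wedgeList_cons (F : Type*) {W : Type*} [Field F] [AddCommGroup W] [Module F W]
    (a : W) (l : List W) : wedgeList F (a :: l) = ι F a * wedgeList F l := by
  simp [wedgeList]

/-- The key identity: `ω₀ ∧ ∂[ω] = ω₀ ∧ ⋯ ∧ ω_{p-1}`. -/
lemma iota_mul_der (F : Type*) {W : Type*} [Field F] [AddCommGroup W] [Module F W]
    {n : ℕ} (ω : Fin (n + 1) → W) : ι F (ω 0) * der F ω = wedge F ω := by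
  have hl : List.ofFn ω = ω 0 :: List.ofFn (fun i : Fin n => ω i.succ) := List.ofFn_succ (f := ω)
  rw [der, Finset.mul_sum, Fin.sum_univ_succ]
  have h0 : ι F (ω 0) * ((-1 : F) ^ ((0 : Fin (n+1)) : ℕ) •
      wedgeList F ((List.ofFn ω).eraseIdx (0 : Fin (n+1)))) = wedge F ω := by
    rw [hl]
    simp [wedge, hl, wedgeList_cons, List.eraseIdx]
  have hs : ∀ k : Fin n, ι F (ω 0) * ((-1 : F) ^ ((k.succ : Fin (n+1)) : ℕ) •
      wedgeList F ((List.ofFn ω).eraseIdx (k.succ : Fin (n+1)))) = 0 := by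
    intro k
    rw [hl]
    have : ((ω 0 :: List.ofFn fun i : Fin n => ω i.succ).eraseIdx ((k.succ : Fin (n+1)) : ℕ))
        = ω 0 :: ((List.ofFn fun i : Fin n => ω i.succ).eraseIdx k) := by
      simp [List.eraseIdx]
    rw [this, wedgeList_cons, mul_smul_comm, ← mul_assoc, ι_sq_zero, zero_mul, smul_zero]
  rw [h0, Finset.sum_eq_zero (fun k _ => hs k), add_zero]

lemma wedge_eq_iotaMulti (F : Type*) {W : Type*} [Field F] [AddCommGroup W] [Module F W]
    {p : ℕ} (ω : Fin p → W) : wedge F ω = ιMulti F p ω := by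
  rw [ιMulti_apply, wedge, wedgeList, List.map_ofFn]
  rfl

lemma wedge_ne_zero_of_linearIndependent {F W : Type*} [Field F] [AddCommGroup W] [Module F W]
    {p : ℕ} {ω : Fin p → W} (hv : LinearIndependent F ω) : wedge F ω ≠ 0 := by
  classical
  have hset : LinearIndepOn F id (Set.range ω) := hv.linearIndepOn_id
  let b := Module.Basis.extend hset
  have hmem : ∀ i, ω i ∈ hset.extend (Set.subset_univ _) := fun i =>
    hset.subset_extend _ (Set.mem_range_self i)
  let f : Fin p → W →ₗ[F] F := fun i => b.coord ⟨ω i, hmem i⟩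
  have hf : ∀ i j, f i (ω j) = if i = j then 1 else 0 := by
    intro i j
    have hbj : b ⟨ω j, hmem j⟩ = ω j := by
      simp [b, Module.Basis.extend_apply_self]
    have key : b.repr (ω j) = Finsupp.single ⟨ω j, hmem j⟩ 1 := by
      conv_lhs => rw [← hbj]
      exact b.repr_self _
    simp only [f, Module.Basis.coord_apply, key]
    rw [Finsupp.single_apply]
    by_cases hij : i = j
    · simp [hij]
    · rw [if_neg, if_neg hij]
      intro hc
      exact hij (hv.injective (congrArg Subtype.val hc).symm)
  let L : W →ₗ[F] (Fin p → F) := LinearMap.pi f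
  let g : W [⋀^Fin p]→ₗ[F] F := (Matrix.detRowAlternating).compLinearMap L
  have hg : g ω = 1 := by
    have : (Matrix.of fun i j => L (ω i) j) = (1 : Matrix (Fin p) (Fin p) F) := by
      ext i j
      simp only [Matrix.of_apply, L, LinearMap.pi_apply, Matrix.one_apply]
      rw [hf j i]
      simp [eq_comm]
    simp only [g, AlternatingMap.compLinearMap_apply, Matrix.detRowAlternating,
      AlternatingMap.coe_mk, MultilinearMap.coe_mk]
    show Matrix.det (Matrix.of fun i j => L (ω i) j) = 1
    rw [this, Matrix.det_one]
  intro hzero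
  let fam : ∀ i, W [⋀^Fin i]→ₗ[F] F := Function.update (fun _ => 0) p g
  have := liftAlternating_apply_ιMulti (R := F) (M := W) (N := F) fam ω
  rw [← wedge_eq_iotaMulti, hzero, map_zero] at this
  have hfam : fam p = g := Function.update_self _ _ _
  rw [hfam, hg] at this
  exact one_ne_zero this.symm

/-- If `∂[ω₁:⋯:ω_p] = 0` then `ω₁, …, ω_p` are linearly dependent;
equivalently `ω₁ ∧ ⋯ ∧ ω_p = 0`. -/
theorem der_eq_zero_dependent {F W : Type*} [Field F] [CharZero F] [AddCommGroup W] [Module F W]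
    {n : ℕ} (ω : Fin (n + 2) → W) (h : der F ω = 0) :
    ¬ LinearIndependent F ω ∧ wedge F ω = 0 := by
  have hw : wedge F ω = 0 := by
    rw [← iota_mul_der F ω, h, mul_zero]
  exact ⟨fun hind => wedge_ne_zero_of_linearIndependent hind hw, hw⟩
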